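/- For finite sets A₁,…,Aₙ ⊂ ℝ \ {0}, the fourth root of the multiplicative energy is subadditive under union: (E^×(⋃ᵢ Aᵢ))^{1/4} ≤ Σᵢ (E^×(Aᵢ))^{1/4}. -/

import Mathlib

open Finset
noncomputable section

def mulE (A B : Finset ℝ) : ℕ :=
  ((A ×ˢ B ×ˢ A ×ˢ B).filter fun q => q.1 * q.2.1 = q.2.2.1 * q.2.2.2).card

def addE (A B : Finset ℝ) : ℕ :=
  ((A ×ˢ B ×ˢ A ×ˢ B).filter fun q => q.1 + q.2.1 = q.2.2.1 + q.2.2.2).card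

def quot (A B : Finset ℝ) : Finset ℝ := (A ×ˢ B).image fun p => p.1 / p.2

def prodSet (A B : Finset ℝ) : Finset ℝ := (A ×ˢ B).image fun p => p.1 * p.2

def dil (l : ℝ) (A : Finset ℝ) : Finset ℝ := A.image fun a => l * a

/-- `x • R⁻¹ = {x / r : r ∈ R}` -/
def dilInv (x : ℝ) (R : Finset ℝ) : Finset ℝ := R.image fun r => x / r

/-- `x ∈ Sym^×_t(Q,R)` iff `|Q ∩ x R⁻¹| ≥ t`. -/
def symCond (t : ℝ) (Q R : Finset ℝ) (x : ℝ) : Prop :=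
  t ≤ ((Q ∩ dilInv x R).card : ℝ)

/-- number of representations of `s` as a product -/
def rmf (A B : Finset ℝ) (s : ℝ) : ℕ := ((A ×ˢ B).filter fun p => p.1 * p.2 = s).card

/-- number of representations of `x` as a quotient -/
def rdf (A B : Finset ℝ) (x : ℝ) : ℕ := ((A ×ˢ B).filter fun p => p.1 / p.2 = x).card

lemma fiber {α : Type*} (s : Finset α) (g : α → ℝ) (F : ℝ → ℝ) :
    ∑ p ∈ s, F (g p) = ∑ y ∈ s.image g, ((s.filter fun p => g p = y).card : ℝ) * F y := by
  rw [← Finset.sum_fiberwise_of_maps_to (g := g)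
    (fun x hx => Finset.mem_image_of_mem g hx) (fun p => F (g p))]
  refine Finset.sum_congr rfl fun y _ => ?_
  have h : ∀ p ∈ s.filter fun p => g p = y, F (g p) = F y := fun p hp => by
    rw [(Finset.mem_filter.mp hp).2]
  rw [Finset.sum_congr rfl h, Finset.sum_const, nsmul_eq_mul]

lemma mulE_sum (A B : Finset ℝ) :
    (mulE A B : ℝ) = ∑ a ∈ A, ∑ b ∈ B, ∑ c ∈ A, ∑ d ∈ B,
      (if a * b = c * d then (1:ℝ) else 0) := by
  rw [mulE, Finset.card_filter]
  push_cast
  rw [Finset.sum_product]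
  refine Finset.sum_congr rfl fun a _ => ?_
  rw [Finset.sum_product]
  refine Finset.sum_congr rfl fun b _ => ?_
  rw [Finset.sum_product]

lemma rmf_sum (A B : Finset ℝ) (s : ℝ) :
    ((rmf A B s : ℝ)) = ∑ c ∈ A, ∑ d ∈ B, (if c * d = s then (1:ℝ) else 0) := by
  rw [rmf, Finset.card_filter]
  push_cast
  rw [Finset.sum_product]

lemma rdf_sum (A B : Finset ℝ) (x : ℝ) :
    ((rdf A B x : ℝ)) = ∑ c ∈ A, ∑ d ∈ B, (if c / d = x then (1:ℝ) else 0) := by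
  rw [rdf, Finset.card_filter]
  push_cast
  rw [Finset.sum_product]

lemma mulE_eq_sum_sq (A B : Finset ℝ) :
    (mulE A B : ℝ) = ∑ y ∈ prodSet A B, ((rmf A B y : ℝ))^2 := by
  have h2 : (mulE A B : ℝ) = ∑ p ∈ A ×ˢ B, ((rmf A B (p.1 * p.2)) : ℝ) := by
    rw [mulE_sum, Finset.sum_product]
    refine Finset.sum_congr rfl fun a _ => Finset.sum_congr rfl fun b _ => ?_
    rw [rmf_sum]
    exact Finset.sum_congr rfl fun c _ => Finset.sum_congr rfl fun d _ => by
      simp [eq_comm]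
  rw [h2, fiber (A ×ˢ B) (fun p => p.1 * p.2) (fun y => (rmf A B y : ℝ))]
  refine Finset.sum_congr rfl fun y _ => ?_
  rw [sq]
  rfl

lemma mulE_eq_sum_D (A B : Finset ℝ) (hA : (0:ℝ) ∉ A) (hB : (0:ℝ) ∉ B) :
    (mulE A B : ℝ) = ∑ x ∈ quot A A, (rdf A A x : ℝ) * (rdf B B x : ℝ) := by
  have h2 : (mulE A B : ℝ) = ∑ p ∈ A ×ˢ A, ((rdf B B (p.1 / p.2)) : ℝ) := by
    rw [mulE_sum, Finset.sum_product]
    refine Finset.sum_congr rfl fun a _ => ?_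
    rw [Finset.sum_comm]
    refine Finset.sum_congr rfl fun c hc => ?_
    rw [Finset.sum_comm, rdf_sum]
    refine Finset.sum_congr rfl fun d _ => Finset.sum_congr rfl fun b hb => ?_
    have hb0 : b ≠ 0 := fun h0 => hB (h0 ▸ hb)
    have hc0 : c ≠ 0 := fun h0 => hA (h0 ▸ hc)
    have hiff : (a * b = c * d) ↔ (d / b = a / c) := by
      rw [div_eq_div_iff hb0 hc0]
      constructor <;> intro h' <;> linear_combination -h'
    simp only [hiff]
  rw [h2, fiber (A ×ˢ A) (fun p => p.1 / p.2) (fun x => (rdf B B x : ℝ))]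
  rfl

lemma rdf_eq_zero {A B : Finset ℝ} {x : ℝ} (hx : x ∉ quot A B) : rdf A B x = 0 := by
  rw [rdf, Finset.card_eq_zero, Finset.filter_eq_empty_iff]
  intro p hp hpx
  exact hx (Finset.mem_image.mpr ⟨p, hp, hpx⟩)

lemma rmf_eq_zero {A B : Finset ℝ} {x : ℝ} (hx : x ∉ prodSet A B) : rmf A B x = 0 := by
  rw [rmf, Finset.card_eq_zero, Finset.filter_eq_empty_iff]
  intro p hp hpx
  exact hx (Finset.mem_image.mpr ⟨p, hp, hpx⟩)

lemma mulE_cs (A B : Finset ℝ) (hA : (0:ℝ) ∉ A) (hB : (0:ℝ) ∉ B) :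
    (mulE A B : ℝ) ≤ Real.sqrt (mulE A A) * Real.sqrt (mulE B B) := by
  set U := quot A A ∪ quot B B with hU
  have hAB : (mulE A B : ℝ) = ∑ x ∈ U, (rdf A A x : ℝ) * (rdf B B x : ℝ) := by
    rw [mulE_eq_sum_D A B hA hB]
    apply Finset.sum_subset Finset.subset_union_left
    intro x _ hx
    rw [rdf_eq_zero hx]
    simp
  have hA2 : (mulE A A : ℝ) = ∑ x ∈ U, ((rdf A A x : ℝ))^2 := by
    rw [mulE_eq_sum_D A A hA hA,
      Finset.sum_congr rfl (fun x _ => (sq ((rdf A A x : ℝ))).symm)]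
    apply Finset.sum_subset Finset.subset_union_left
    intro x _ hx
    rw [rdf_eq_zero hx]
    simp
  have hB2 : (mulE B B : ℝ) = ∑ x ∈ U, ((rdf B B x : ℝ))^2 := by
    rw [mulE_eq_sum_D B B hB hB,
      Finset.sum_congr rfl (fun x _ => (sq ((rdf B B x : ℝ))).symm)]
    apply Finset.sum_subset Finset.subset_union_right
    intro x _ hx
    rw [rdf_eq_zero hx]
    simp
  have hcs := Finset.sum_mul_sq_le_sq_mul_sq U
    (fun x => (rdf A A x : ℝ)) (fun x => (rdf B B x : ℝ))
  have hnn : (0:ℝ) ≤ ∑ x ∈ U, (rdf A A x : ℝ) * (rdf B B x : ℝ) :=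
    Finset.sum_nonneg fun x _ => mul_nonneg (Nat.cast_nonneg _) (Nat.cast_nonneg _)
  have hfnn : (0:ℝ) ≤ ∑ x ∈ U, ((rdf A A x : ℝ))^2 :=
    Finset.sum_nonneg fun x _ => sq_nonneg _
  calc (mulE A B : ℝ) = ∑ x ∈ U, (rdf A A x : ℝ) * (rdf B B x : ℝ) := hAB
    _ = Real.sqrt ((∑ x ∈ U, (rdf A A x : ℝ) * (rdf B B x : ℝ))^2) := (Real.sqrt_sq hnn).symm
    _ ≤ Real.sqrt ((∑ x ∈ U, ((rdf A A x : ℝ))^2) * ∑ x ∈ U, ((rdf B B x : ℝ))^2) :=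
        Real.sqrt_le_sqrt hcs
    _ = Real.sqrt (∑ x ∈ U, ((rdf A A x : ℝ))^2) *
        Real.sqrt (∑ x ∈ U, ((rdf B B x : ℝ))^2) := Real.sqrt_mul hfnn _
    _ = Real.sqrt (mulE A A) * Real.sqrt (mulE B B) := by rw [hA2, hB2]

lemma mink2 {α : Type*} (T : Finset α) (f g : α → ℝ) :
    Real.sqrt (∑ s ∈ T, (f s + g s)^2) ≤
      Real.sqrt (∑ s ∈ T, f s ^ 2) + Real.sqrt (∑ s ∈ T, g s ^ 2) := by
  have hf : (0:ℝ) ≤ ∑ s ∈ T, f s ^ 2 := Finset.sum_nonneg fun _ _ => sq_nonneg _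
  have hg : (0:ℝ) ≤ ∑ s ∈ T, g s ^ 2 := Finset.sum_nonneg fun _ _ => sq_nonneg _
  have hfg : ∑ s ∈ T, f s * g s ≤
      Real.sqrt (∑ s ∈ T, f s ^ 2) * Real.sqrt (∑ s ∈ T, g s ^ 2) := by
    calc ∑ s ∈ T, f s * g s ≤ Real.sqrt ((∑ s ∈ T, f s * g s)^2) := by
          rw [Real.sqrt_sq_eq_abs]; exact le_abs_self _
      _ ≤ Real.sqrt ((∑ s ∈ T, f s ^ 2) * ∑ s ∈ T, g s ^ 2) :=
          Real.sqrt_le_sqrt (Finset.sum_mul_sq_le_sq_mul_sq T f g)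
      _ = _ := Real.sqrt_mul hf _
  have expand : ∑ s ∈ T, (f s + g s)^2 =
      (∑ s ∈ T, f s ^ 2) + 2 * (∑ s ∈ T, f s * g s) + ∑ s ∈ T, g s ^ 2 := by
    rw [Finset.sum_congr rfl (fun s _ => show (f s + g s)^2
      = f s ^ 2 + 2 * (f s * g s) + g s ^ 2 by ring)]
    rw [Finset.sum_add_distrib, Finset.sum_add_distrib, ← Finset.mul_sum]
  have key : ∑ s ∈ T, (f s + g s)^2 ≤
      (Real.sqrt (∑ s ∈ T, f s ^ 2) + Real.sqrt (∑ s ∈ T, g s ^ 2))^2 := by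
    nlinarith [Real.sq_sqrt hf, Real.sq_sqrt hg, hfg]
  calc Real.sqrt (∑ s ∈ T, (f s + g s)^2)
      ≤ Real.sqrt ((Real.sqrt (∑ s ∈ T, f s ^ 2) + Real.sqrt (∑ s ∈ T, g s ^ 2))^2) :=
        Real.sqrt_le_sqrt key
    _ = _ := Real.sqrt_sq (by positivity)

lemma minkowski {α β : Type*} (T : Finset α) (K : Finset β) (v : β → α → ℝ) :
    Real.sqrt (∑ s ∈ T, (∑ k ∈ K, v k s)^2) ≤
      ∑ k ∈ K, Real.sqrt (∑ s ∈ T, (v k s)^2) := by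
  induction K using Finset.cons_induction with
  | empty => simp
  | cons a K ha ih =>
    rw [Finset.sum_cons]
    calc Real.sqrt (∑ s ∈ T, (∑ k ∈ Finset.cons a K ha, v k s)^2)
        = Real.sqrt (∑ s ∈ T, (v a s + ∑ k ∈ K, v k s)^2) := by
          simp only [Finset.sum_cons]
      _ ≤ Real.sqrt (∑ s ∈ T, (v a s)^2) +
          Real.sqrt (∑ s ∈ T, (∑ k ∈ K, v k s)^2) := mink2 T _ _
      _ ≤ _ := add_le_add le_rfl ih

lemma sqrt_sqrt_eq (x : ℝ) (hx : 0 ≤ x) :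
    Real.sqrt (Real.sqrt x) = x ^ ((1:ℝ)/4) := by
  rw [Real.sqrt_eq_rpow, Real.sqrt_eq_rpow, ← Real.rpow_mul hx]
  norm_num

theorem stmt5 (n : ℕ) (A : Fin n → Finset ℝ) (h : ∀ i, (0:ℝ) ∉ A i) :
    ((mulE (Finset.univ.biUnion A) (Finset.univ.biUnion A) : ℝ)) ^ ((1:ℝ)/4) ≤
      ∑ i : Fin n, ((mulE (A i) (A i) : ℝ)) ^ ((1:ℝ)/4) := by
  set X := Finset.univ.biUnion A with hX
  set e : Fin n → ℝ := fun i => ((mulE (A i) (A i) : ℝ)) ^ ((1:ℝ)/4) with he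
  have he_nn : ∀ i, 0 ≤ e i := fun i => Real.rpow_nonneg (Nat.cast_nonneg _) _
  have hS : (0:ℝ) ≤ ∑ i, e i := Finset.sum_nonneg fun i _ => he_nn i
  have hmemX : ∀ (i : Fin n) (a : ℝ), a ∈ A i → a ∈ X := fun i a hai =>
    Finset.mem_biUnion.mpr ⟨i, Finset.mem_univ i, hai⟩
  -- pointwise bound on representation function
  have hpt : ∀ s : ℝ, (rmf X X s : ℝ) ≤
      ∑ ij : Fin n × Fin n, (rmf (A ij.1) (A ij.2) s : ℝ) := by
    intro s
    have hnat : rmf X X s ≤ ∑ ij : Fin n × Fin n, rmf (A ij.1) (A ij.2) s := by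
      rw [rmf]
      calc ((X ×ˢ X).filter fun p => p.1 * p.2 = s).card
          ≤ ((Finset.univ : Finset (Fin n × Fin n)).biUnion fun ij =>
              ((A ij.1 ×ˢ A ij.2).filter fun p => p.1 * p.2 = s)).card := by
            apply Finset.card_le_card
            intro p hp
            obtain ⟨hpm, hps⟩ := Finset.mem_filter.mp hp
            obtain ⟨hp1, hp2⟩ := Finset.mem_product.mp hpm
            obtain ⟨i, _, hi⟩ := Finset.mem_biUnion.mp hp1
            obtain ⟨j, _, hj⟩ := Finset.mem_biUnion.mp hp2
            exact Finset.mem_biUnion.mpr ⟨(i, j), Finset.mem_univ _,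
              Finset.mem_filter.mpr ⟨Finset.mem_product.mpr ⟨hi, hj⟩, hps⟩⟩
        _ ≤ ∑ ij : Fin n × Fin n, rmf (A ij.1) (A ij.2) s := Finset.card_biUnion_le
    exact_mod_cast hnat
  have key : Real.sqrt (mulE X X) ≤ (∑ i, e i)^2 := by
    have h1 : Real.sqrt (mulE X X) ≤ ∑ ij : Fin n × Fin n,
        Real.sqrt (∑ s ∈ prodSet X X, ((rmf (A ij.1) (A ij.2) s : ℝ))^2) := by
      calc Real.sqrt (mulE X X)
          = Real.sqrt (∑ s ∈ prodSet X X, ((rmf X X s : ℝ))^2) := by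
            rw [mulE_eq_sum_sq]
        _ ≤ Real.sqrt (∑ s ∈ prodSet X X,
            (∑ ij : Fin n × Fin n, (rmf (A ij.1) (A ij.2) s : ℝ))^2) := by
            apply Real.sqrt_le_sqrt
            apply Finset.sum_le_sum
            intro s _
            exact pow_le_pow_left₀ (Nat.cast_nonneg _) (hpt s) 2
        _ ≤ _ := minkowski _ _ _
    have h2 : ∀ ij : Fin n × Fin n,
        Real.sqrt (∑ s ∈ prodSet X X, ((rmf (A ij.1) (A ij.2) s : ℝ))^2) ≤
          e ij.1 * e ij.2 := by
      rintro ⟨i, j⟩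
      have hsub : prodSet (A i) (A j) ⊆ prodSet X X := by
        intro y hy
        obtain ⟨p, hp, hpy⟩ := Finset.mem_image.mp hy
        obtain ⟨hp1, hp2⟩ := Finset.mem_product.mp hp
        exact Finset.mem_image.mpr ⟨p, Finset.mem_product.mpr
          ⟨hmemX i p.1 hp1, hmemX j p.2 hp2⟩, hpy⟩
      have hsum : ∑ s ∈ prodSet X X, ((rmf (A i) (A j) s : ℝ))^2
          = (mulE (A i) (A j) : ℝ) := by
        rw [mulE_eq_sum_sq]
        symm
        apply Finset.sum_subset hsub
        intro x _ hx
        rw [rmf_eq_zero hx]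
        simp
      rw [hsum]
      calc Real.sqrt (mulE (A i) (A j))
          ≤ Real.sqrt (Real.sqrt (mulE (A i) (A i)) * Real.sqrt (mulE (A j) (A j))) :=
            Real.sqrt_le_sqrt (mulE_cs _ _ (h i) (h j))
        _ = Real.sqrt (Real.sqrt (mulE (A i) (A i))) *
            Real.sqrt (Real.sqrt (mulE (A j) (A j))) :=
            Real.sqrt_mul (Real.sqrt_nonneg _) _
        _ = e i * e j := by
            rw [sqrt_sqrt_eq _ (Nat.cast_nonneg _), sqrt_sqrt_eq _ (Nat.cast_nonneg _)]
      -- done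
    calc Real.sqrt (mulE X X) ≤ ∑ ij : Fin n × Fin n,
          Real.sqrt (∑ s ∈ prodSet X X, ((rmf (A ij.1) (A ij.2) s : ℝ))^2) := h1
      _ ≤ ∑ ij : Fin n × Fin n, e ij.1 * e ij.2 :=
          Finset.sum_le_sum fun ij _ => h2 ij
      _ = (∑ i, e i)^2 := by
          rw [sq, Finset.sum_mul_sum]
          exact Fintype.sum_prod_type fun ij => e ij.1 * e ij.2
  calc ((mulE X X : ℝ)) ^ ((1:ℝ)/4)
      = Real.sqrt (Real.sqrt (mulE X X)) := (sqrt_sqrt_eq _ (Nat.cast_nonneg _)).symm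
    _ ≤ Real.sqrt ((∑ i, e i)^2) := Real.sqrt_le_sqrt key
    _ = ∑ i, e i := Real.sqrt_sq hS
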